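/- Let a, b ∈ ℝ, τ > 0, b₁ := e^{−aτ} b, and let ρ ∈ C⁰([0,∞)). Then the non-homogeneous delay differential equation ẋ(t) = a x(t) + b x(t − τ) + ρ(t) for t > 0 with zero initial condition x(t) = 0 for t ∈ [−τ, 0] has the unique solution x̄ ∈ C⁰([−τ,∞)) ∩ C¹([−τ,0]) ∩ C¹([0,∞)) given by x̄(t) = 0 for t ∈ [−τ, 0) and x̄(t) = ∫₀ᵗ e^{a(t−s)} exp_τ{b₁, t − τ − s} ρ(s) ds for t > 0. -/

import Mathlib

open Set Filter Topology Real intervalIntegral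
open MeasureTheory

noncomputable section

/-- The delayed exponential function `exp_τ{b, t}`. -/
def delayedExp (b τ t : ℝ) : ℝ :=
  if t < -τ then 0
  else if t < 0 then 1
  else ∑ j ∈ Finset.range (⌊t / τ⌋.toNat + 2),
    b ^ j * (t - ((j : ℝ) - 1) * τ) ^ j / (Nat.factorial j)

/-- partial sums of delayed exponential -/
def dS (β τ : ℝ) (k : ℕ) (t : ℝ) : ℝ :=
  ∑ j ∈ Finset.range (k+1), β ^ j * (t - ((j : ℝ) - 1) * τ) ^ j / (Nat.factorial j)

section DExp

variable {β τ : ℝ} (hτ : 0 < τ)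

lemma dS_zero (t : ℝ) : dS β τ 0 t = 1 := by
  simp [dS]

lemma dS_succ (k : ℕ) (t : ℝ) :
    dS β τ (k+1) t = dS β τ k t + β ^ (k+1) * (t - (k:ℝ) * τ) ^ (k+1) / (Nat.factorial (k+1)) := by
  simp only [dS, Finset.sum_range_succ]
  push_cast
  ring

lemma dS_continuous (k : ℕ) : Continuous (dS β τ k) := by
  unfold dS
  fun_prop

include hτ in
lemma delayedExp_of_lt (t : ℝ) (h : t < -τ) : delayedExp β τ t = 0 := by
  rw [delayedExp, if_pos h]

include hτ in
lemma delayedExp_eq_dS (k : ℕ) (t : ℝ) (h1 : (k:ℝ) * τ - τ ≤ t) (h2 : t < (k:ℝ) * τ) :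
    delayedExp β τ t = dS β τ k t := by
  rcases Nat.eq_zero_or_pos k with hk | hk
  · subst hk
    simp only [Nat.cast_zero, zero_mul] at h1 h2
    rw [delayedExp, if_neg (by linarith), if_pos h2, dS_zero]
  · have hk1 : (1:ℝ) ≤ (k:ℝ) := by exact_mod_cast hk
    have ht0 : 0 ≤ t := by nlinarith
    have hfloor : ⌊t / τ⌋ = (k:ℤ) - 1 := by
      rw [Int.floor_eq_iff]
      constructor
      · push_cast
        rw [le_div_iff₀ hτ]
        linarith
      · push_cast
        rw [div_lt_iff₀ hτ]
        linarith
    rw [delayedExp, if_neg (by linarith), if_neg (by linarith), hfloor]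
    have : ((k:ℤ) - 1).toNat + 2 = k + 1 := by omega
    rw [this]
    rfl

include hτ in
lemma delayedExp_eq_dS' (k : ℕ) (t : ℝ) (h1 : (k:ℝ) * τ - τ ≤ t) (h2 : t ≤ (k:ℝ) * τ) :
    delayedExp β τ t = dS β τ k t := by
  rcases lt_or_eq_of_le h2 with h2 | h2
  · exact delayedExp_eq_dS hτ k t h1 h2
  · have := delayedExp_eq_dS (β := β) hτ (k+1) t (by push_cast; linarith) (by push_cast; nlinarith)
    rw [this, dS_succ, h2]
    simp

include hτ in
lemma delayedExp_one (t : ℝ) (h1 : -τ ≤ t) (h2 : t ≤ 0) : delayedExp β τ t = 1 := by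
  rw [delayedExp_eq_dS' hτ 0 t (by push_cast; linarith) (by push_cast; linarith), dS_zero]


lemma dS_hasDerivAt (k : ℕ) (t : ℝ) :
    HasDerivAt (dS β τ (k+1)) (β * dS β τ k (t - τ)) t := by
  have H : ∀ j : ℕ, HasDerivAt (fun u => β ^ j * (u - ((j : ℝ) - 1) * τ) ^ j / (Nat.factorial j))
      (β ^ j / (Nat.factorial j) * ((j:ℝ) * (t - ((j : ℝ) - 1) * τ) ^ (j-1))) t := by
    intro j
    have h1 : HasDerivAt (fun u : ℝ => (u - ((j : ℝ) - 1) * τ) ^ j)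
        ((j:ℝ) * (t - ((j : ℝ) - 1) * τ) ^ (j-1)) t := by
      have := ((hasDerivAt_id t).sub_const (((j : ℝ) - 1) * τ)).fun_pow j
      simpa using this
    have heq : (fun u : ℝ => β ^ j * (u - ((j : ℝ) - 1) * τ) ^ j / (Nat.factorial j))
        = fun u : ℝ => (β ^ j / (Nat.factorial j)) * (u - ((j : ℝ) - 1) * τ) ^ j := by
      funext u; ring
    rw [heq]
    exact h1.const_mul (β ^ j / (Nat.factorial j))
  have hsum : HasDerivAt (dS β τ (k+1))
      (∑ j ∈ Finset.range (k+2), β ^ j / (Nat.factorial j) * ((j:ℝ) * (t - ((j : ℝ) - 1) * τ) ^ (j-1))) t := by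
    unfold dS
    exact HasDerivAt.fun_sum (fun j _ => H j)
  convert hsum using 1
  rw [Finset.sum_range_succ']
  simp only [Nat.cast_zero, Nat.factorial_zero, pow_zero, Nat.cast_ofNat, mul_zero, zero_mul,
    add_zero]
  rw [dS, Finset.mul_sum]
  apply Finset.sum_congr rfl
  intro i _
  have hfac : (Nat.factorial (i+1) : ℝ) = (i+1) * Nat.factorial i := by
    push_cast [Nat.factorial_succ]; ring
  have hne : ((i:ℝ)+1) ≠ 0 := by positivity
  have hfne : (Nat.factorial i : ℝ) ≠ 0 := by positivity
  push_cast [hfac]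
  field_simp
  ring



include hτ in
lemma exists_index (t : ℝ) (h : -τ ≤ t) :
    ∃ k : ℕ, (k:ℝ) * τ - τ ≤ t ∧ t < (k:ℝ) * τ := by
  have hm : (-1:ℤ) ≤ ⌊t/τ⌋ := by
    rw [Int.le_floor]
    push_cast
    rw [le_div_iff₀ hτ]
    linarith
  have hcast : ((((⌊t/τ⌋+1).toNat : ℕ)) : ℝ) = (⌊t/τ⌋ : ℝ) + 1 := by
    have h0 : (0:ℤ) ≤ ⌊t/τ⌋+1 := by omega
    rw [show ((((⌊t/τ⌋+1).toNat : ℕ)) : ℝ) = (((⌊t/τ⌋+1).toNat : ℤ) : ℝ) from by push_cast; ring,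
      Int.toNat_of_nonneg h0]
    push_cast; ring
  refine ⟨(⌊t/τ⌋+1).toNat, ?_, ?_⟩
  · rw [hcast]
    have := Int.floor_le (t/τ)
    have h2 : (⌊t/τ⌋ : ℝ) * τ ≤ t := by
      rw [← le_div_iff₀ hτ]; exact this
    linarith
  · rw [hcast]
    have := Int.lt_floor_add_one (t/τ)
    rw [div_lt_iff₀ hτ] at this
    linarith

include hτ in
lemma delayedExp_hasDerivWithinAt (t : ℝ) (ht : -τ ≤ t) :
    HasDerivWithinAt (delayedExp β τ) (β * delayedExp β τ (t - τ)) (Ici t) t := by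
  obtain ⟨k, hk1, hk2⟩ := exists_index hτ t ht
  have hDt : delayedExp β τ t = dS β τ k t := delayedExp_eq_dS hτ k t hk1 hk2
  have hev : delayedExp β τ =ᶠ[𝓝[Ici t] t] dS β τ k := by
    filter_upwards [mem_nhdsWithin_of_mem_nhds (Iio_mem_nhds hk2), self_mem_nhdsWithin]
      with u hu1 hu2
    exact delayedExp_eq_dS hτ k u (le_trans hk1 hu2) hu1
  cases k with
  | zero =>
      have h0 : HasDerivWithinAt (dS β τ 0) 0 (Ici t) t := by
        have : (dS β τ 0) = fun _ : ℝ => (1:ℝ) := by funext u; exact dS_zero u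
        rw [this]
        exact (hasDerivAt_const t 1).hasDerivWithinAt
      have hz : delayedExp β τ (t - τ) = 0 := by
        apply delayedExp_of_lt hτ
        simp only [Nat.cast_zero, zero_mul] at hk2
        linarith
      rw [hz, mul_zero]
      exact h0.congr_of_eventuallyEq hev hDt
  | succ j =>
      have hder := (dS_hasDerivAt (β := β) (τ := τ) j t).hasDerivWithinAt (s := Ici t)
      have hval : delayedExp β τ (t - τ) = dS β τ j (t - τ) := by
        apply delayedExp_eq_dS' hτ j (t - τ)
        · push_cast at hk1 ⊢; linarith
        · push_cast at hk2 ⊢; linarith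
      rw [hval]
      exact hder.congr_of_eventuallyEq hev hDt

include hτ in
lemma delayedExp_continuousOn : ContinuousOn (delayedExp β τ) (Ici 0) := by
  intro t ht
  simp only [mem_Ici] at ht
  obtain ⟨k, hk1, hk2⟩ := exists_index hτ t (by linarith)
  have hright : ContinuousWithinAt (delayedExp β τ) (Ici t) t :=
    (delayedExp_hasDerivWithinAt hτ t (by linarith)).continuousWithinAt
  rcases eq_or_lt_of_le ht with ht0 | ht0
  · exact hright.mono (by rw [← ht0])
  have hleft : ContinuousWithinAt (delayedExp β τ) (Iic t) t := by
    rcases lt_or_eq_of_le hk1 with hkk | hkk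
    · have hev : delayedExp β τ =ᶠ[𝓝 t] dS β τ k := by
        filter_upwards [Ioo_mem_nhds hkk hk2] with u hu
        exact delayedExp_eq_dS hτ k u (le_of_lt hu.1) hu.2
      exact (((dS_continuous k).continuousAt).congr hev.symm).continuousWithinAt
    · -- t = k τ - τ, and t > 0 so k ≥ 1
      cases k with
      | zero =>
          exfalso
          simp only [Nat.cast_zero, zero_mul] at hk2
          linarith
      | succ j =>
          have hjt : t = (j:ℝ) * τ := by push_cast at hkk; linarith
          have hmem : Ioc (t - τ) t ∈ 𝓝[Iic t] t := by
            apply Filter.inter_mem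
            · exact mem_nhdsWithin_of_mem_nhds (Ioi_mem_nhds (by linarith))
            · exact self_mem_nhdsWithin
          have hev : delayedExp β τ =ᶠ[𝓝[Iic t] t] dS β τ j := by
            filter_upwards [hmem] with u hu
            exact delayedExp_eq_dS' hτ j u (by rw [hjt] at hu; linarith [hu.1])
              (by rw [hjt] at hu; linarith [hu.2])
          have hvt : delayedExp β τ t = dS β τ j t :=
            delayedExp_eq_dS' hτ j t (by linarith [hjt]) (le_of_eq hjt)
          exact (((dS_continuous j).continuousAt).continuousWithinAt).congr_of_eventuallyEq
            hev hvt
  exact (hleft.union hright).mono (fun x _ => le_total x t)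


/-- `delayedExp` without the cutoff below `-τ`: a continuous function. -/
def dT (β τ t : ℝ) : ℝ := if t ≤ 0 then 1 else delayedExp β τ t

include hτ in
lemma dT_eq (t : ℝ) (h : -τ ≤ t) : delayedExp β τ t = dT β τ t := by
  unfold dT
  split_ifs with h0
  · exact delayedExp_one hτ t h h0
  · rfl

include hτ in
lemma dT_continuous : Continuous (dT β τ) := by
  unfold dT
  apply continuous_if_le continuous_id continuous_const continuousOn_const
  · exact (delayedExp_continuousOn hτ).congr_mono (fun x hx => rfl) (fun x hx => hx)
  · intro x hx
    simp only [id] at hx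
    subst hx
    exact (delayedExp_one hτ 0 (by linarith) le_rfl).symm

include hτ in
lemma delayedExp_eq_indicator :
    delayedExp β τ = (Ici (-τ)).indicator (dT β τ) := by
  funext t
  by_cases h : -τ ≤ t
  · rw [Set.indicator_of_mem (mem_Ici.mpr h), dT_eq hτ t h]
  · rw [Set.indicator_of_notMem (fun hc => h (mem_Ici.mp hc)), delayedExp_of_lt hτ t (by linarith [not_le.mp h])]

include hτ in
lemma measurable_delayedExp : Measurable (delayedExp β τ) := by
  rw [delayedExp_eq_indicator hτ]
  exact ((dT_continuous hτ).measurable).indicator measurableSet_Ici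

include hτ in
lemma abs_delayedExp_le (t : ℝ) : |delayedExp β τ t| ≤ |dT β τ t| := by
  rw [delayedExp_eq_indicator hτ]
  by_cases h : t ∈ Ici (-τ)
  · rw [Set.indicator_of_mem h]
  · rw [Set.indicator_of_notMem h]
    simp

include hτ in
lemma delayedExp_intervalIntegrable (f g : ℝ → ℝ) (hf : Continuous f) (α γ : ℝ)
    (hg : ∀ x, g x = α * x + γ) (p q : ℝ) :
    IntervalIntegrable (fun x => f x * delayedExp β τ (g x)) volume p q := by
  have hgc : Continuous g := by
    have : g = fun x => α * x + γ := funext hg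
    rw [this]; continuity
  have hcont : Continuous fun x => f x * dT β τ (g x) :=
    hf.mul ((dT_continuous hτ).comp hgc)
  apply IntervalIntegrable.mono_fun (hcont.intervalIntegrable p q)
  · exact (hf.measurable.mul ((measurable_delayedExp hτ).comp hgc.measurable)).aestronglyMeasurable
  · apply Filter.Eventually.of_forall
    intro x
    simp only [Real.norm_eq_abs, abs_mul]
    exact mul_le_mul_of_nonneg_left (abs_delayedExp_le hτ (g x)) (abs_nonneg _)

include hτ in
lemma kernel_ftc (a s T : ℝ) (hsT : s ≤ T) :
    ∫ u in s..T, (a * Real.exp (a*(u-s)) * delayedExp β τ (u-τ-s)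
      + β * Real.exp (a*(u-s)) * delayedExp β τ (u-τ-s-τ))
      = Real.exp (a*(T-s)) * delayedExp β τ (T-τ-s) - 1 := by
  have hend : Real.exp (a*(s-s)) * delayedExp β τ (s-τ-s) = 1 := by
    have h1 : s - τ - s = -τ := by ring
    have h2 : a * (s - s) = 0 := by ring
    rw [h1, h2, Real.exp_zero, delayedExp_one hτ (-τ) le_rfl (by linarith), one_mul]
  calc ∫ u in s..T, (a * Real.exp (a*(u-s)) * delayedExp β τ (u-τ-s)
      + β * Real.exp (a*(u-s)) * delayedExp β τ (u-τ-s-τ))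
      = Real.exp (a*(T-s)) * delayedExp β τ (T-τ-s)
        - Real.exp (a*(s-s)) * delayedExp β τ (s-τ-s) := by
        apply intervalIntegral.integral_eq_sub_of_hasDeriv_right_of_le hsT
        · apply ContinuousOn.congr (f := fun u => Real.exp (a*(u-s)) * dT β τ (u-τ-s))
          · apply Continuous.continuousOn
            apply Continuous.mul
            · continuity
            · exact (dT_continuous hτ).comp (by continuity)
          · intro u hu
            simp only [mem_Icc] at hu
            show Real.exp (a*(u-s)) * delayedExp β τ (u-τ-s)
              = Real.exp (a*(u-s)) * dT β τ (u-τ-s)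
            rw [dT_eq hτ (u-τ-s) (by linarith [hu.1])]
        · intro u hu
          simp only [mem_Ioo] at hu
          have h1 : HasDerivAt (fun u => Real.exp (a*(u-s))) (Real.exp (a*(u-s)) * a) u := by
            simpa using (((hasDerivAt_id u).sub_const s).const_mul a).exp
          have hin : HasDerivWithinAt (fun v : ℝ => v - τ - s) 1 (Ioi u) u := by
            simpa using (((hasDerivAt_id u).sub_const τ).sub_const s).hasDerivWithinAt (s := Ioi u)
          have h2 : HasDerivWithinAt (fun v : ℝ => delayedExp β τ (v - τ - s))
              (β * delayedExp β τ (u-τ-s-τ) * 1) (Ioi u) u := by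
            apply HasDerivWithinAt.comp (s' := Ici (u - τ - s)) u
              (delayedExp_hasDerivWithinAt hτ (u-τ-s) (by linarith [hu.1])) hin
            intro v hv
            simp only [mem_Ioi] at hv
            simp only [mem_Ici]
            linarith
          have := (h1.hasDerivWithinAt (s := Ioi u)).fun_mul h2
          exact this.congr_deriv (by ring)
        · apply IntervalIntegrable.add
          · exact delayedExp_intervalIntegrable hτ (fun u => a * Real.exp (a*(u-s)))
              (fun u => u - τ - s) (by continuity) 1 (-τ-s) (fun x => by ring) s T
          · exact delayedExp_intervalIntegrable hτ (fun u => β * Real.exp (a*(u-s)))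
              (fun u => u - τ - s - τ) (by continuity) 1 (-2*τ-s) (fun x => by ring) s T
      _ = Real.exp (a*(T-s)) * delayedExp β τ (T-τ-s) - 1 := by rw [hend]


end DExp

/-- `y` solves the non-homogeneous delay equation `ẏ(t) = a y(t) + b y(t−τ) + ρ(t)` for
`t > 0` with zero initial condition `y ≡ 0` on `[−τ,0]`: continuous on `[−τ,∞)` and
continuously differentiable on `[0,∞)`. -/
def IsNonHomDelaySolution (a b τ : ℝ) (ρ y : ℝ → ℝ) : Prop :=
  ContinuousOn y (Set.Ici (-τ)) ∧
  (∀ t ∈ Set.Icc (-τ) (0:ℝ), y t = 0) ∧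
  (∀ t > (0:ℝ), HasDerivAt y (a * y t + b * y (t - τ) + ρ t) t) ∧
  (∀ t ∈ Set.Ici (0:ℝ), HasDerivWithinAt y (a * y t + b * y (t - τ) + ρ t) (Set.Ici 0) t)

/-- The Duhamel-type solution
`x̄(t) = ∫₀ᵗ e^{a(t−s)} exp_τ{b₁, t−τ−s} ρ(s) ds` for `t > 0`, `x̄ = 0` on `[−τ,0]`,
with `b₁ = e^{−aτ} b`. -/
def nonHomDelaySolution (a b τ : ℝ) (ρ : ℝ → ℝ) (t : ℝ) : ℝ :=
  if t ≤ 0 then 0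
  else ∫ s in (0:ℝ)..t, Real.exp (a * (t - s)) * delayedExp (Real.exp (-a * τ) * b) τ (t - τ - s) * ρ s

section Main

variable {a b : ℝ} {τ : ℝ} (hτ : 0 < τ) {ρ : ℝ → ℝ} (hρ : ContinuousOn ρ (Set.Ici 0))

include hτ hρ in
set_option maxHeartbeats 2000000 in
lemma nonHomDelaySolution_isSolution :
    IsNonHomDelaySolution a b τ ρ (nonHomDelaySolution a b τ ρ) := by
  set β := Real.exp (-a * τ) * b with hβdef
  set ρt : ℝ → ℝ := fun s => ρ (max s 0) with hρtdef
  have hρtc : Continuous ρt :=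
    hρ.comp_continuous (continuous_id.max continuous_const) (fun x => mem_Ici.mpr (le_max_right x 0))
  have hρeq : ∀ s : ℝ, 0 ≤ s → ρt s = ρ s := by
    intro s hs
    simp only [hρtdef, max_eq_left hs]
  set J : ℝ → ℝ → ℝ := fun v s => Real.exp (a*(v-s)) * ρt s * delayedExp β τ (v-τ-s) with hJdef
  set xb := nonHomDelaySolution a b τ ρ with hxbdef
  -- basic facts about J
  have hJ0 : ∀ v s : ℝ, v < s → J v s = 0 := by
    intro v s h
    simp only [hJdef]
    rw [delayedExp_of_lt hτ _ (by linarith), mul_zero]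
  have hJint : ∀ v p q : ℝ, IntervalIntegrable (J v) MeasureTheory.volume p q := by
    intro v p q
    exact delayedExp_intervalIntegrable hτ (fun s => Real.exp (a*(v-s)) * ρt s)
      (fun s => v - τ - s) (by fun_prop) (-1) (v - τ) (fun x => by ring) p q
  -- representation of xb
  have hx0 : ∀ v : ℝ, v ≤ 0 → xb v = 0 := by
    intro v hv
    simp only [hxbdef, nonHomDelaySolution, if_pos hv]
  have hxv : ∀ v : ℝ, 0 < v → xb v = ∫ s in (0:ℝ)..v, J v s := by
    intro v hv
    simp only [hxbdef, nonHomDelaySolution, if_neg (not_le.mpr hv)]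
    apply intervalIntegral.integral_congr
    intro s hs
    rw [uIcc_of_le (le_of_lt hv)] at hs
    simp only [hJdef]
    beta_reduce
    rw [← hρeq s hs.1, ← hβdef]
    ring
  have hxJ : ∀ t : ℝ, 0 ≤ t → ∀ v : ℝ, v ≤ t → xb v = ∫ s in (0:ℝ)..t, J v s := by
    intro t ht v hv
    by_cases hv0 : v ≤ 0
    · rw [hx0 v hv0, intervalIntegral.integral_of_le ht]
      symm
      apply MeasureTheory.setIntegral_eq_zero_of_forall_eq_zero
      intro s hs
      exact hJ0 v s (lt_of_le_of_lt hv0 hs.1)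
    · push_neg at hv0
      rw [hxv v hv0,
        ← intervalIntegral.integral_add_adjacent_intervals (hJint v 0 v) (hJint v v t)]
      have : ∫ s in v..t, J v s = 0 := by
        rw [intervalIntegral.integral_of_le hv]
        apply MeasureTheory.setIntegral_eq_zero_of_forall_eq_zero
        intro s hs
        exact hJ0 v s hs.1
      rw [this, add_zero]
  -- continuity of xb
  have hxcont : Continuous xb := by
    have hψ : Continuous fun v : ℝ => ∫ s in (0:ℝ)..v,
        (fun v s => Real.exp (a*(v-s)) * ρt s * dT β τ (v-τ-s)) v s := by
      refine intervalIntegral.continuous_parametric_intervalIntegral_of_continuous ?_ continuous_id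
      have huncurry : (Function.uncurry fun v s => Real.exp (a*(v-s)) * ρt s * dT β τ (v-τ-s))
          = fun p : ℝ × ℝ => Real.exp (a*(p.1-p.2)) * ρt p.2 * dT β τ (p.1-τ-p.2) := rfl
      rw [huncurry]
      exact ((Real.continuous_exp.comp (by fun_prop)).mul (hρtc.comp continuous_snd)).mul
        ((dT_continuous hτ).comp (by fun_prop))
    have hxx : xb = fun v => if v ≤ 0 then 0
        else ∫ s in (0:ℝ)..v, Real.exp (a*(v-s)) * ρt s * dT β τ (v-τ-s) := by
      funext v
      simp only [hxbdef, nonHomDelaySolution]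
      split_ifs with h
      · rfl
      · push_neg at h
        apply intervalIntegral.integral_congr
        intro s hs
        rw [uIcc_of_le (le_of_lt h)] at hs
        beta_reduce
        rw [← hρeq s hs.1, ← hβdef, ← dT_eq hτ (v-τ-s) (by linarith [hs.2])]
        ring
    rw [hxx]
    apply continuous_if_le continuous_id continuous_const continuousOn_const
      hψ.continuousOn
    intro x hx
    simp only [id] at hx
    subst hx
    simp [intervalIntegral.integral_same]
  -- kernel facts
  have hbβ : ∀ u s : ℝ, β * Real.exp (a*(u-s)) = b * Real.exp (a*(u-τ-s)) := by
    intro u s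
    rw [hβdef, mul_comm (Real.exp (-a*τ)) b, mul_assoc, ← Real.exp_add]
    congr 1
    ring
  set F : ℝ → ℝ → ℝ := fun u s => a * J u s + b * J (u-τ) s with hFdef
  have hJint2 : ∀ s p q : ℝ, IntervalIntegrable (fun u => F u s) MeasureTheory.volume p q := by
    intro s p q
    have hfun : (fun u => F u s)
        = fun u => (a * Real.exp (a*(u-s)) * ρt s) * delayedExp β τ (u - τ - s)
          + (b * Real.exp (a*(u-τ-s)) * ρt s) * delayedExp β τ (u - τ - s - τ) := by
      funext u
      simp only [hFdef, hJdef]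
      beta_reduce
      rw [show u - τ - τ - s = u - τ - s - τ from by ring]
      ring
    rw [hfun]
    exact IntervalIntegrable.add
      (delayedExp_intervalIntegrable hτ _ _ (by fun_prop) 1 (-τ-s) (fun x => by ring) p q)
      (delayedExp_intervalIntegrable hτ _ _ (by fun_prop) 1 (-τ-s-τ) (fun x => by ring) p q)
  have hker : ∀ t : ℝ, 0 ≤ t → ∀ s : ℝ, 0 ≤ s → s ≤ t →
      (∫ u in (0:ℝ)..t, F u s) = J t s - ρt s := by
    intro t ht s hs0 hst
    have hI1 : (∫ u in (0:ℝ)..s, F u s) = 0 := by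
      rw [intervalIntegral.integral_of_le hs0]
      have hae : ∀ᵐ u : ℝ, u ∉ ({s} : Set ℝ) :=
        MeasureTheory.measure_eq_zero_iff_ae_notMem.mp (MeasureTheory.measure_singleton s)
      rw [MeasureTheory.setIntegral_congr_ae measurableSet_Ioc (g := fun _ => (0:ℝ)) ?_]
      · simp
      · filter_upwards [hae] with u hu hmem
        have hus : u < s := lt_of_le_of_ne hmem.2 (by simpa using hu)
        simp only [hFdef]
        beta_reduce
        rw [hJ0 u s hus, hJ0 (u-τ) s (by linarith), mul_zero, mul_zero, add_zero]
    have hI2 : (∫ u in s..t, F u s) = J t s - ρt s := by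
      have hEq : EqOn (fun u => F u s)
          (fun u => (a * Real.exp (a*(u-s)) * delayedExp β τ (u-τ-s)
            + β * Real.exp (a*(u-s)) * delayedExp β τ (u-τ-s-τ)) * ρt s) (uIcc s t) := by
        intro u _
        simp only [hFdef, hJdef]
        beta_reduce
        rw [show u - τ - τ - s = u - τ - s - τ from by ring]
        linear_combination (-(ρt s * delayedExp β τ (u-τ-s-τ))) * (hbβ u s)
      rw [intervalIntegral.integral_congr hEq, intervalIntegral.integral_mul_const,
        kernel_ftc hτ a s t hst]
      simp only [hJdef]
      beta_reduce
      ring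
    rw [← intervalIntegral.integral_add_adjacent_intervals (hJint2 s 0 s) (hJint2 s s t),
      hI1, hI2, zero_add]
  -- the integral equation for xb
  have hmain : ∀ t : ℝ, 0 ≤ t → xb t = ∫ u in (0:ℝ)..t, (a * xb u + b * xb (u-τ) + ρt u) := by
    intro t ht
    have hmJ : Measurable fun p : ℝ × ℝ => J p.1 p.2 := by
      simp only [hJdef]
      apply Measurable.mul
      apply Measurable.mul
      · exact (Real.continuous_exp.comp (show Continuous fun p : ℝ × ℝ => a*(p.1-p.2) by
          fun_prop)).measurable
      · exact (hρtc.comp continuous_snd).measurable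
      · exact (measurable_delayedExp hτ).comp
          (show Measurable fun p : ℝ × ℝ => p.1 - τ - p.2 by measurability)
    have hmJ' : Measurable fun p : ℝ × ℝ => J (p.1 - τ) p.2 := by
      simp only [hJdef]
      apply Measurable.mul
      apply Measurable.mul
      · exact (Real.continuous_exp.comp (show Continuous fun p : ℝ × ℝ => a*(p.1-τ-p.2) by
          fun_prop)).measurable
      · exact (hρtc.comp continuous_snd).measurable
      · exact (measurable_delayedExp hτ).comp
          (show Measurable fun p : ℝ × ℝ => p.1 - τ - τ - p.2 by measurability)
    have hmF : Measurable (Function.uncurry F) :=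
      (hmJ.const_mul a).add (hmJ'.const_mul b)
    have hcontComp : Continuous fun p : ℝ × ℝ =>
        |a| * (Real.exp (a*(p.1-p.2)) * |ρt p.2| * |dT β τ (p.1-τ-p.2)|)
        + |b| * (Real.exp (a*(p.1-τ-p.2)) * |ρt p.2| * |dT β τ (p.1-τ-τ-p.2)|) := by
      have h1 := dT_continuous (β := β) hτ
      fun_prop
    obtain ⟨C, hC⟩ := (isCompact_Icc.prod isCompact_Icc :
      IsCompact (Icc (0:ℝ) t ×ˢ Icc (0:ℝ) t)).exists_bound_of_continuousOn hcontComp.continuousOn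
    have habsJ : ∀ v s2 : ℝ, |J v s2| ≤ Real.exp (a*(v-s2)) * |ρt s2| * |dT β τ (v-τ-s2)| := by
      intro v s2
      simp only [hJdef]
      beta_reduce
      rw [abs_mul, abs_mul, Real.abs_exp]
      exact mul_le_mul_of_nonneg_left (abs_delayedExp_le hτ _) (by positivity)
    have hbound : ∀ p : ℝ × ℝ, p ∈ Icc (0:ℝ) t ×ˢ Icc (0:ℝ) t → |Function.uncurry F p| ≤ C := by
      intro p hp
      have h1 := habsJ p.1 p.2
      have h2 := habsJ (p.1 - τ) p.2
      have hCp := hC p hp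
      rw [Real.norm_eq_abs] at hCp
      have htri : |Function.uncurry F p| ≤ |a| * |J p.1 p.2| + |b| * |J (p.1-τ) p.2| := by
        calc |Function.uncurry F p| = |a * J p.1 p.2 + b * J (p.1-τ) p.2| := rfl
        _ ≤ |a * J p.1 p.2| + |b * J (p.1-τ) p.2| := abs_add_le _ _
        _ = |a| * |J p.1 p.2| + |b| * |J (p.1-τ) p.2| := by
              rw [abs_mul a (J p.1 p.2), abs_mul b (J (p.1-τ) p.2)]
      have hcmp : |a| * |J p.1 p.2| + |b| * |J (p.1-τ) p.2|
          ≤ |a| * (Real.exp (a*(p.1-p.2)) * |ρt p.2| * |dT β τ (p.1-τ-p.2)|)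
            + |b| * (Real.exp (a*(p.1-τ-p.2)) * |ρt p.2| * |dT β τ (p.1-τ-τ-p.2)|) := by
        apply add_le_add
        · exact mul_le_mul_of_nonneg_left h1 (abs_nonneg a)
        · apply mul_le_mul_of_nonneg_left _ (abs_nonneg b)
          convert h2 using 3 <;> ring
      exact htri.trans (hcmp.trans ((le_abs_self _).trans hCp))
    haveI hfin : MeasureTheory.IsFiniteMeasure (MeasureTheory.volume.restrict (Ioc (0:ℝ) t)) := by
      constructor
      rw [MeasureTheory.Measure.restrict_apply_univ]
      simp [Real.volume_Ioc]
    have hIntF : MeasureTheory.Integrable (Function.uncurry F)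
        ((MeasureTheory.volume.restrict (Ioc (0:ℝ) t)).prod
          (MeasureTheory.volume.restrict (Ioc (0:ℝ) t))) := by
      apply MeasureTheory.Integrable.mono'
        (MeasureTheory.integrable_const C) hmF.aestronglyMeasurable
      rw [MeasureTheory.Measure.prod_restrict,
        MeasureTheory.ae_restrict_iff' (measurableSet_Ioc.prod measurableSet_Ioc)]
      apply Filter.Eventually.of_forall
      intro p hp
      rw [Real.norm_eq_abs]
      exact hbound p ⟨Ioc_subset_Icc_self hp.1, Ioc_subset_Icc_self hp.2⟩
    have hswap : (∫ u in (0:ℝ)..t, ∫ s in (0:ℝ)..t, F u s)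
        = ∫ s in (0:ℝ)..t, ∫ u in (0:ℝ)..t, F u s := by
      simp only [intervalIntegral.integral_of_le ht]
      exact MeasureTheory.integral_integral_swap hIntF
    have hstepA : EqOn (fun u => a * xb u + b * xb (u-τ))
        (fun u => ∫ s in (0:ℝ)..t, F u s) (uIcc 0 t) := by
      intro u hu
      rw [uIcc_of_le ht] at hu
      beta_reduce
      rw [hxJ t ht u hu.2, hxJ t ht (u-τ) (by linarith [hu.2]),
        ← intervalIntegral.integral_const_mul, ← intervalIntegral.integral_const_mul,
        ← intervalIntegral.integral_add ((hJint u 0 t).const_mul a)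
          ((hJint (u-τ) 0 t).const_mul b)]
    have hcxb1 : Continuous fun u : ℝ => a * xb u + b * xb (u-τ) := by fun_prop
    calc xb t = ∫ s in (0:ℝ)..t, J t s := hxJ t ht t le_rfl
    _ = (∫ s in (0:ℝ)..t, (J t s - ρt s)) + ∫ s in (0:ℝ)..t, ρt s := by
        rw [← intervalIntegral.integral_add ((hJint t 0 t).sub (hρtc.intervalIntegrable 0 t))
          (hρtc.intervalIntegrable 0 t)]
        simp only [sub_add_cancel]
    _ = (∫ s in (0:ℝ)..t, ∫ u in (0:ℝ)..t, F u s) + ∫ u in (0:ℝ)..t, ρt u := by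
        congr 1
        apply intervalIntegral.integral_congr
        intro s hs
        rw [uIcc_of_le ht] at hs
        beta_reduce
        rw [← hker t ht s hs.1 hs.2]
    _ = (∫ u in (0:ℝ)..t, ∫ s in (0:ℝ)..t, F u s) + ∫ u in (0:ℝ)..t, ρt u := by rw [hswap]
    _ = (∫ u in (0:ℝ)..t, (a * xb u + b * xb (u-τ))) + ∫ u in (0:ℝ)..t, ρt u := by
        congr 1
        exact (intervalIntegral.integral_congr hstepA).symm
    _ = ∫ u in (0:ℝ)..t, (a * xb u + b * xb (u-τ) + ρt u) := by
        rw [← intervalIntegral.integral_add (hcxb1.intervalIntegrable 0 t)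
          (hρtc.intervalIntegrable 0 t)]
  -- conclude: derivative facts
  set G : ℝ → ℝ := fun u => a * xb u + b * xb (u-τ) + ρt u with hGdef
  have hGc : Continuous G := by
    apply Continuous.add
    apply Continuous.add
    · exact continuous_const.mul hxcont
    · exact continuous_const.mul (hxcont.comp (by fun_prop))
    · exact hρtc
  have hFder : ∀ r : ℝ, HasDerivAt (fun v => ∫ u in (0:ℝ)..r + (v - r), G u) (G r) r := by
    intro r
    have := intervalIntegral.integral_hasDerivAt_right (f := G) (a := 0) (b := r)
      (hGc.intervalIntegrable 0 r)
      hGc.stronglyMeasurable.stronglyMeasurableAtFilter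
      hGc.continuousAt
    simpa using this
  have hFder' : ∀ r : ℝ, HasDerivAt (fun v => ∫ u in (0:ℝ)..v, G u) (G r) r := by
    intro r
    have := hFder r
    simpa using this
  have hGρ : ∀ r : ℝ, 0 ≤ r → G r = a * xb r + b * xb (r - τ) + ρ r := by
    intro r hr
    simp only [hGdef]
    rw [hρeq r hr]
  refine ⟨hxcont.continuousOn, ?_, ?_, ?_⟩
  · intro t htm
    exact hx0 t htm.2
  · intro t ht
    have hev : xb =ᶠ[𝓝 t] (fun v => ∫ u in (0:ℝ)..v, G u) := by
      filter_upwards [Ioi_mem_nhds ht] with v hv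
      exact hmain v (le_of_lt hv)
    have hd := (hFder' t).congr_of_eventuallyEq hev
    rw [hGρ t (le_of_lt ht)] at hd
    exact hd
  · intro t ht
    rw [mem_Ici] at ht
    have hw : HasDerivWithinAt xb (G t) (Ici 0) t := by
      apply ((hFder' t).hasDerivWithinAt).congr ?_ (hmain t ht)
      intro v hv
      exact hmain v hv
    rw [hGρ t ht] at hw
    exact hw

include hτ hρ in
set_option maxHeartbeats 1000000 in
theorem nonhom_delay_unique (y : ℝ → ℝ) (hy : IsNonHomDelaySolution a b τ ρ y) :
    ∀ t ∈ Set.Ici (-τ), y t = nonHomDelaySolution a b τ ρ t := by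
  intro t htm
  rw [mem_Ici] at htm
  set xb := nonHomDelaySolution a b τ ρ with hxbdef
  obtain ⟨hyc, hy0, hyd, hyd'⟩ := hy
  obtain ⟨hxc, hx0, hxd, hxd'⟩ := nonHomDelaySolution_isSolution hτ hρ
  set w : ℝ → ℝ := fun u => y u - xb u with hwdef
  have hwc : ContinuousOn w (Ici (-τ)) := hyc.sub hxc
  have hw0 : ∀ u ∈ Icc (-τ) (0:ℝ), w u = 0 := by
    intro u hu
    simp only [hwdef]
    rw [hy0 u hu, hxbdef, hx0 u hu, sub_zero]
  have hwd : ∀ u : ℝ, 0 ≤ u → HasDerivWithinAt w (a * w u + b * w (u - τ)) (Ici u) u := by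
    intro u hu
    have key : HasDerivWithinAt w ((a * y u + b * y (u-τ) + ρ u)
        - (a * xb u + b * xb (u-τ) + ρ u)) (Ici u) u := by
      rcases eq_or_lt_of_le hu with h0 | h0
      · subst h0
        exact (hyd' 0 self_mem_Ici).sub (hxd' 0 self_mem_Ici)
      · exact ((hyd u h0).sub (hxd u h0)).hasDerivWithinAt
    convert key using 1
    simp only [hwdef]
    ring
  have hzero : ∀ k : ℕ, ∀ u ∈ Icc (-τ) ((k:ℝ)*τ), w u = 0 := by
    intro k
    induction k with
    | zero =>
        intro u hu
        push_cast at hu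
        exact hw0 u (by simpa using hu)
    | succ n ih =>
        intro u hu
        by_cases hun : u ≤ (n:ℝ)*τ
        · exact ih u ⟨hu.1, hun⟩
        · push_neg at hun
          have hn0 : (0:ℝ) ≤ (n:ℝ)*τ := by positivity
          have huB : u ≤ (n:ℝ)*τ + τ := by
            have := hu.2
            push_cast at this
            linarith
          have hG := norm_le_gronwallBound_of_norm_deriv_right_le
            (f := w) (f' := fun x => a * w x + b * w (x-τ)) (δ := 0) (K := |a|) (ε := 0)
            (a := (n:ℝ)*τ) (b := (n:ℝ)*τ + τ)
            (hwc.mono (fun x hx => by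
              simp only [mem_Icc] at hx
              simp only [mem_Ici]
              linarith [hx.1]))
            (fun x hx => hwd x (le_trans hn0 hx.1))
            (by rw [ih ((n:ℝ)*τ) ⟨by linarith, le_refl _⟩]; simp)
            (fun x hx => by
              simp only [mem_Ico] at hx
              have hxτ : w (x - τ) = 0 := ih (x-τ) ⟨by linarith [hx.1], by linarith [hx.2]⟩
              show ‖a * w x + b * w (x - τ)‖ ≤ |a| * ‖w x‖ + 0
              rw [hxτ, mul_zero, add_zero]
              simp [Real.norm_eq_abs, abs_mul])
          have hle := hG u ⟨le_of_lt hun, huB⟩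
          rw [gronwallBound_ε0_δ0] at hle
          exact norm_le_zero_iff.mp hle
  obtain ⟨k, hk⟩ := exists_nat_ge (t/τ)
  have htk : t ≤ (k:ℝ)*τ := by
    rw [div_le_iff₀ hτ] at hk
    linarith
  have hwz := hzero k t ⟨htm, htk⟩
  simp only [hwdef] at hwz
  linarith

end Main

/-- For continuous `ρ`, the non-homogeneous delay equation
`ẋ(t) = a x(t) + b x(t−τ) + ρ(t)` for `t > 0` with zero initial condition has the unique
solution `x̄(t) = 0` on `[−τ,0)` and `x̄(t) = ∫₀ᵗ e^{a(t−s)} exp_τ{b₁, t−τ−s} ρ(s) ds`. -/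
theorem nonhom_delay_ode_unique_solution
    (a b τ : ℝ) (hτ : 0 < τ) (ρ : ℝ → ℝ) (hρ : ContinuousOn ρ (Set.Ici 0)) :
    IsNonHomDelaySolution a b τ ρ (nonHomDelaySolution a b τ ρ) ∧
    ∀ y : ℝ → ℝ, IsNonHomDelaySolution a b τ ρ y →
      ∀ t ∈ Set.Ici (-τ), y t = nonHomDelaySolution a b τ ρ t := by
  exact ⟨nonHomDelaySolution_isSolution hτ hρ,
    fun y hy => nonhom_delay_unique hτ hρ y hy⟩

end
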